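/- In the push-pull protocol on the complete graph with n vertices, in a round starting with k informed nodes each uninformed node becomes informed with probability p_k = 1 - (1 - 1/n)^k * (n-k)/n, and this satisfies 2k/n - 3k^2/(2n^2) ≤ p_k ≤ 2k/n for all 0 ≤ k < n. -/

import Mathlib

open MeasureTheory

lemma quad_pow_bound (x : ℝ) (h0 : 0 ≤ x) (h1 : x ≤ 1) :
    ∀ k : ℕ, (1 - x) ^ k ≤ 1 - k * x + k * (k - 1) / 2 * x ^ 2
  | 0 => by norm_num
  | (k + 1) => by
      have ih := quad_pow_bound x h0 h1 k
      have hx : 0 ≤ 1 - x := by linarith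
      have hkk : 0 ≤ (k : ℝ) * ((k : ℝ) - 1) := by
        rcases Nat.eq_zero_or_pos k with h | h
        · simp [h]
        · have : (1 : ℝ) ≤ k := by exact_mod_cast h
          nlinarith
      calc (1 - x) ^ (k + 1) = (1 - x) ^ k * (1 - x) := pow_succ _ _
        _ ≤ (1 - ↑k * x + ↑k * (↑k - 1) / 2 * x ^ 2) * (1 - x) :=
            mul_le_mul_of_nonneg_right ih hx
        _ ≤ 1 - (↑(k + 1) : ℝ) * x + (↑(k + 1) : ℝ) * ((↑(k + 1) : ℝ) - 1) / 2 * x ^ 2 := by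
            push_cast
            nlinarith [mul_nonneg hkk (pow_nonneg h0 3)]

/-- Push-pull protocol on the complete graph: every node calls a uniformly random node,
independently; the informed nodes are those `y` with `(y : ℕ) < k`.  An uninformed node
`x` becomes informed iff some informed node calls it (push) or it calls an informed node
(pull). -/
theorem push_pull_protocol_success_probability (n k : ℕ) (hn : 0 < n) (hk : k < n)
    (x : Fin n) (hx : k ≤ (x : ℕ)) :
    ((@PMF.uniformOfFintype (Fin n → Fin n) _ ⟨id⟩).toMeasure
        {f | (∃ i : Fin n, (i : ℕ) < k ∧ f i = x) ∨ ((f x : ℕ) < k)}).toReal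
      = 1 - (1 - 1 / (n : ℝ)) ^ k * (((n : ℝ) - k) / n) ∧
    2 * (k : ℝ) / n - 3 * (k : ℝ) ^ 2 / (2 * (n : ℝ) ^ 2)
      ≤ 1 - (1 - 1 / (n : ℝ)) ^ k * (((n : ℝ) - k) / n) ∧
    1 - (1 - 1 / (n : ℝ)) ^ k * (((n : ℝ) - k) / n) ≤ 2 * (k : ℝ) / n := by
  have hN : (0 : ℝ) < n := by exact_mod_cast hn
  have hKN : (k : ℝ) + 1 ≤ n := by exact_mod_cast hk
  have hK0 : (0 : ℝ) ≤ k := Nat.cast_nonneg k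
  have hNK : ((n : ℝ) - k) / n = 1 - k / n := by field_simp
  have hq0 : (0 : ℝ) ≤ 1 - k / n := by
    rw [sub_nonneg, div_le_one hN]; linarith
  have hinv0 : (0 : ℝ) ≤ 1 / n := by positivity
  have hinv1 : (1 : ℝ) / n ≤ 1 := by
    rw [div_le_one hN]; linarith
  -- Bernoulli lower bound on (1-1/n)^k
  have hb : 1 - (k : ℝ) / n ≤ (1 - 1 / (n : ℝ)) ^ k := by
    have := one_add_mul_le_pow (a := -(1 / (n : ℝ))) (by linarith) k
    simp only [← sub_eq_add_neg, mul_neg] at this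
    rw [mul_one_div] at this
    linarith
  -- quadratic upper bound on (1-1/n)^k
  have hub := quad_pow_bound (1 / (n : ℝ)) hinv0 hinv1 k
  constructor
  · -- the probability computation
    classical
    letI : Nonempty (Fin n → Fin n) := ⟨id⟩
    set S : Set (Fin n → Fin n) :=
      {f | (∃ i : Fin n, (i : ℕ) < k ∧ f i = x) ∨ ((f x : ℕ) < k)} with hS
    set b : Fin n := ⟨k, hk⟩ with hb'
    set A : Fin n → Finset (Fin n) := fun j =>
      if (j : ℕ) < k then {x}ᶜ else if j = x then Finset.Ici b else Finset.univ with hA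
    have hSc : Sᶜ = ↑(Fintype.piFinset A) := by
      ext f
      simp only [Set.mem_compl_iff, hS, Set.mem_setOf_eq, not_or, not_exists, not_and,
        not_lt, Finset.coe_sort_coe, Finset.mem_coe, Fintype.mem_piFinset]
      constructor
      · rintro ⟨h1, h2⟩ j
        by_cases hjk : (j : ℕ) < k
        · simp [hA, hjk, h1 j hjk]
        · by_cases hjx : j = x
          · subst hjx
            simp only [hA, hjk, if_false, if_true, if_pos rfl, Finset.mem_Ici]
            exact h2
          · simp [hA, hjk, hjx]
      · intro h
        refine ⟨fun i hik => ?_, ?_⟩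
        · have := h i; simpa [hA, hik] using this
        · have := h x
          simp only [hA] at this
          rw [if_neg (by omega : ¬ (x : ℕ) < k)] at this
          simpa [Fin.le_def, hb'] using this
    have hmeas : MeasurableSet S := (Set.toFinite S).measurableSet
    -- cardinality of the complement
    have hcardA : ∀ j : Fin n, (A j).card =
        if (j : ℕ) < k then n - 1 else if j = x then n - k else n := by
      intro j
      simp only [hA]
      split_ifs with h1 h2
      · simp [Finset.card_compl]
      · simp [hb']
      · simp
    have hfiltlt : (Finset.univ.filter fun j : Fin n => (j : ℕ) < k) = Finset.Iio b := by
      ext j; simp [Fin.lt_def, hb']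
    have hfiltge : (Finset.univ.filter fun j : Fin n => ¬ (j : ℕ) < k) = Finset.Ici b := by
      ext j; simp [Fin.le_def, hb', Nat.not_lt]
    have hcard : (Fintype.piFinset A).card = (n - 1) ^ k * ((n - k) * n ^ (n - k - 1)) := by
      rw [Fintype.card_piFinset]
      calc ∏ j : Fin n, (A j).card
          = ∏ j : Fin n, (if (j : ℕ) < k then n - 1 else if j = x then n - k else n) :=
            Finset.prod_congr rfl fun j _ => hcardA j
        _ = (n - 1) ^ k * ((n - k) * n ^ (n - k - 1)) := by
            rw [Finset.prod_ite]
            congr 1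
            · rw [Finset.prod_const, hfiltlt, Fin.card_Iio]
            · rw [Finset.prod_ite, hfiltge]
              have hxIci : x ∈ Finset.Ici b := by
                simp [Fin.le_def, hb', hx]
              have h1 : (Finset.Ici b).filter (fun j => j = x) = {x} := by
                ext j; simp +contextual [Fin.le_def, hb', hx]
              have h2 : ((Finset.Ici b).filter (fun j => ¬ j = x)).card = n - k - 1 := by
                rw [Finset.filter_not, Finset.card_sdiff_of_subset (Finset.filter_subset _ _), h1]
                simp [hb']
              rw [Finset.prod_const, Finset.prod_const, h1, h2]
              simp
    -- measure of the complement
    have hμc : ((PMF.uniformOfFintype (Fin n → Fin n)).toMeasure Sᶜ).toReal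
        = (((n : ℝ) - 1) ^ k * (((n : ℝ) - k) * (n : ℝ) ^ (n - k - 1))) / (n : ℝ) ^ n := by
      rw [PMF.toMeasure_uniformOfFintype_apply _ hmeas.compl]; simp only [hSc]
      simp only [Finset.coe_sort_coe, Fintype.card_coe, hcard, Fintype.card_fun,
        Fintype.card_fin]
      rw [ENNReal.toReal_div, ENNReal.toReal_natCast, ENNReal.toReal_natCast]
      push_cast [Nat.cast_sub hn, Nat.cast_sub hk.le]
      ring
    have hμtop : (PMF.uniformOfFintype (Fin n → Fin n)).toMeasure S ≠ ⊤ := measure_ne_top _ _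
    have hμctop : (PMF.uniformOfFintype (Fin n → Fin n)).toMeasure Sᶜ ≠ ⊤ := measure_ne_top _ _
    have hsum : (PMF.uniformOfFintype (Fin n → Fin n)).toMeasure S
        + (PMF.uniformOfFintype (Fin n → Fin n)).toMeasure Sᶜ = 1 :=
      by rw [measure_add_measure_compl hmeas]; simp
    have hsum' : ((PMF.uniformOfFintype (Fin n → Fin n)).toMeasure S).toReal
        + ((PMF.uniformOfFintype (Fin n → Fin n)).toMeasure Sᶜ).toReal = 1 := by
      rw [← ENNReal.toReal_add hμtop hμctop, hsum]; simp
    have key : (((n : ℝ) - 1) ^ k * (((n : ℝ) - k) * (n : ℝ) ^ (n - k - 1))) / (n : ℝ) ^ n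
        = (1 - 1 / (n : ℝ)) ^ k * (((n : ℝ) - k) / n) := by
      have hexp : (n : ℝ) ^ n = (n : ℝ) ^ k * (n : ℝ) ^ (n - k - 1) * (n : ℝ) := by
        rw [← pow_add, ← pow_succ]
        congr 1
        omega
      have h1n : (1 : ℝ) - 1 / n = ((n : ℝ) - 1) / n := by field_simp
      rw [h1n, div_pow, hexp]
      have hpow : (0 : ℝ) < (n : ℝ) ^ k := by positivity
      have hpow2 : (0 : ℝ) < (n : ℝ) ^ (n - k - 1) := by positivity
      field_simp
    linarith [hsum', hμc, key]
  constructor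
  · -- lower bound
    have hkk : 0 ≤ (k : ℝ) * ((k : ℝ) - 1) := by
      rcases Nat.eq_zero_or_pos k with h | h
      · simp [h]
      · have : (1 : ℝ) ≤ k := by exact_mod_cast h
        nlinarith
    rw [show (((n : ℝ) - k) / n) = 1 - (k : ℝ) * (1 / n) from by rw [hNK]; ring,
      show 2 * (k : ℝ) / n = 2 * ((k : ℝ) * (1 / n)) from by ring,
      show 3 * (k : ℝ) ^ 2 / (2 * (n : ℝ) ^ 2) = 3 / 2 * ((k : ℝ) * (1 / n)) ^ 2 from by ring]
    have hq0' : (0 : ℝ) ≤ 1 - (k : ℝ) * (1 / n) := by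
      rw [show (k : ℝ) * (1 / n) = k / n from by ring]; exact hq0
    have hBq : (1 - 1 / (n : ℝ)) ^ k * (1 - (k : ℝ) * (1 / n))
        ≤ (1 - (k : ℝ) * (1 / n) + (k : ℝ) * ((k : ℝ) - 1) / 2 * (1 / (n : ℝ)) ^ 2)
            * (1 - (k : ℝ) * (1 / n)) :=
      mul_le_mul_of_nonneg_right hub hq0'
    have hc0 : (0 : ℝ) ≤ (k : ℝ) * ((k : ℝ) - 1) / 2 * (1 / (n : ℝ)) ^ 2 :=
      mul_nonneg (by linarith) (sq_nonneg _)
    have h1a : 1 - (k : ℝ) * (1 / n) ≤ 1 := by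
      have : 0 ≤ (k : ℝ) * (1 / n) := mul_nonneg hK0 hinv0
      linarith
    have t1 : ((k : ℝ) * ((k : ℝ) - 1) / 2 * (1 / (n : ℝ)) ^ 2) * (1 - (k : ℝ) * (1 / n))
        ≤ ((k : ℝ) * ((k : ℝ) - 1) / 2 * (1 / (n : ℝ)) ^ 2) * 1 :=
      mul_le_mul_of_nonneg_left h1a hc0
    have t2 : (k : ℝ) * ((k : ℝ) - 1) * (1 / (n : ℝ)) ^ 2 ≤ (k : ℝ) ^ 2 * (1 / (n : ℝ)) ^ 2 :=
      mul_le_mul_of_nonneg_right (by nlinarith) (sq_nonneg _)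
    linarith [hBq, t1, t2]
  · -- upper bound
    rw [show (((n : ℝ) - k) / n) = 1 - (k : ℝ) * (1 / n) from by rw [hNK]; ring,
      show 2 * (k : ℝ) / n = 2 * ((k : ℝ) * (1 / n)) from by ring]
    have hq0' : (0 : ℝ) ≤ 1 - (k : ℝ) * (1 / n) := by
      rw [show (k : ℝ) * (1 / n) = k / n from by ring]; exact hq0
    have hb2 : 1 - (k : ℝ) * (1 / n) ≤ (1 - 1 / (n : ℝ)) ^ k := by
      rw [show (k : ℝ) * (1 / n) = k / n from by ring]; exact hb
    have h2 : (1 - (k : ℝ) * (1 / n)) * (1 - (k : ℝ) * (1 / n))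
        ≤ (1 - 1 / (n : ℝ)) ^ k * (1 - (k : ℝ) * (1 / n)) :=
      mul_le_mul_of_nonneg_right hb2 hq0'
    linarith [h2, sq_nonneg ((k : ℝ) * (1 / n))]
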